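/- Let n ≥ 2 and m ≥ 1 be integers. For every real λ ≥ 1 and every r ∈ (0, π/2), one has (λ⁴·sin⁴r + λ⁴·sin²r + 6λ² + 4)/(4·B²) + (m−1)·(1 − f_λ'(r)²)/f_λ(r)² + (n−1)·λ²·(B + 1)/(2·A·B) ≥ 1, where A = λ²·sin²r + cos²r, B = λ²·sin²r + 1, f_λ(r) = sin r / B^{1/4}, and f_λ' is the derivative of f_λ. -/

import Mathlib

/-- The warping function `f_λ(r) = sin r / (λ²·sin²r + 1)^{1/4}`. -/
noncomputable def fl (l r : ℝ) : ℝ :=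
  Real.sin r / (l ^ 2 * Real.sin r ^ 2 + 1) ^ ((1 : ℝ) / 4)

lemma deriv_fl (l r : ℝ) :
    deriv (fl l) r = Real.cos r * (l ^ 2 * Real.sin r ^ 2 / 2 + 1) /
      (l ^ 2 * Real.sin r ^ 2 + 1) ^ ((5 : ℝ) / 4) := by
  set s := Real.sin r with hs
  set c := Real.cos r with hc
  have hB : (0:ℝ) < l ^ 2 * s ^ 2 + 1 := by positivity
  set B := l ^ 2 * s ^ 2 + 1 with hBdef
  have h1 : HasDerivAt Real.sin c r := Real.hasDerivAt_sin r
  have h2 : HasDerivAt (fun x => Real.sin x ^ 2) (2 * s ^ 1 * c) r := h1.pow 2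
  have h3 : HasDerivAt (fun x => l ^ 2 * Real.sin x ^ 2 + 1)
      (l ^ 2 * (2 * s ^ 1 * c)) r := (h2.const_mul (l ^ 2)).add_const 1
  have h5 : HasDerivAt (fun x => (l ^ 2 * Real.sin x ^ 2 + 1) ^ ((1:ℝ)/4))
      (l ^ 2 * (2 * s ^ 1 * c) * ((1:ℝ)/4) * B ^ ((1:ℝ)/4 - 1)) r :=
    h3.rpow_const (Or.inl hB.ne')
  have hPpos : (0:ℝ) < B ^ ((1:ℝ)/4) := Real.rpow_pos_of_pos hB _
  have h6 : HasDerivAt (fl l)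
      ((c * B ^ ((1:ℝ)/4) - s * (l ^ 2 * (2 * s ^ 1 * c) * ((1:ℝ)/4) * B ^ ((1:ℝ)/4 - 1))) /
        (B ^ ((1:ℝ)/4)) ^ 2) r := h1.div h5 hPpos.ne'
  rw [h6.deriv]
  -- set t = B^(1/4)
  set t := B ^ ((1:ℝ)/4) with htdef
  have ht : 0 < t := hPpos
  have ht4 : t ^ 4 = B := by
    rw [htdef, ← Real.rpow_natCast (B ^ ((1:ℝ)/4)) 4, ← Real.rpow_mul hB.le]
    norm_num
  have hneg : B ^ ((1:ℝ)/4 - 1) = t / t ^ 4 := by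
    rw [Real.rpow_sub hB, Real.rpow_one, ht4]
  have h54 : B ^ ((5:ℝ)/4) = t ^ 5 := by
    rw [htdef, ← Real.rpow_natCast (B ^ ((1:ℝ)/4)) 5, ← Real.rpow_mul hB.le]
    norm_num
  rw [hneg, h54]
  have hls : l ^ 2 * s ^ 2 = t ^ 4 - 1 := by rw [ht4]; ring
  field_simp
  linear_combination (-8*c) * hls

theorem stmt_14 (n m : ℤ) (hn : 2 ≤ n) (hm : 1 ≤ m)
    (l : ℝ) (hl : 1 ≤ l) (r : ℝ) (hr : r ∈ Set.Ioo 0 (Real.pi / 2)) :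
    (l ^ 4 * Real.sin r ^ 4 + l ^ 4 * Real.sin r ^ 2 + 6 * l ^ 2 + 4) /
          (4 * (l ^ 2 * Real.sin r ^ 2 + 1) ^ 2) +
        ((m : ℝ) - 1) * ((1 - (deriv (fl l) r) ^ 2) / (fl l r) ^ 2) +
        ((n : ℝ) - 1) * (l ^ 2 * ((l ^ 2 * Real.sin r ^ 2 + 1) + 1) /
          (2 * (l ^ 2 * Real.sin r ^ 2 + Real.cos r ^ 2) * (l ^ 2 * Real.sin r ^ 2 + 1))) ≥
      1 := by
  obtain ⟨hr0, hr2⟩ := hr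
  have hs : 0 < Real.sin r := Real.sin_pos_of_pos_of_lt_pi hr0 (lt_trans hr2 (by linarith [Real.pi_pos]))
  have hc : 0 < Real.cos r := Real.cos_pos_of_mem_Ioo ⟨by linarith [Real.pi_pos], hr2⟩
  have hs1 : Real.sin r ≤ 1 := Real.sin_le_one r
  have hc1 : Real.cos r ≤ 1 := Real.cos_le_one r
  set s := Real.sin r
  set c := Real.cos r
  have hB : (0:ℝ) < l ^ 2 * s ^ 2 + 1 := by positivity
  set B := l ^ 2 * s ^ 2 + 1 with hBdef
  have hB1 : (1:ℝ) ≤ B := by nlinarith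
  have hA : (0:ℝ) < l ^ 2 * s ^ 2 + c ^ 2 := by positivity
  -- Term 1 ≥ 1/2
  have hT1 : (l ^ 4 * s ^ 4 + l ^ 4 * s ^ 2 + 6 * l ^ 2 + 4) / (4 * B ^ 2) ≥ 1 / 2 := by
    rw [ge_iff_le, div_le_div_iff₀ (by norm_num) (by positivity)]
    have h1 : s ^ 2 ≤ 1 := by nlinarith
    nlinarith [sq_nonneg l, sq_nonneg (l*s), sq_nonneg (l^2*s), mul_pos hs hs,
      sq_nonneg (l^2*s^2 - l^2*s)]
  -- Term 3 ≥ 1/2  (with n - 1 ≥ 1)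
  have hT3core : l ^ 2 * (B + 1) / (2 * (l ^ 2 * s ^ 2 + c ^ 2) * B) ≥ 1 / 2 := by
    rw [ge_iff_le, div_le_div_iff₀ (by norm_num) (by positivity)]
    have hsc : s ^ 2 + c ^ 2 = 1 := Real.sin_sq_add_cos_sq r
    nlinarith [mul_nonneg (mul_nonneg (sub_nonneg.2 (one_le_pow₀ hl : 1 ≤ l^2)) hB.le)
      (by nlinarith : (0:ℝ) ≤ 1 - s ^ 2)]
  have hn1 : (1:ℝ) ≤ (n:ℝ) - 1 := by
    have : (2:ℝ) ≤ (n:ℝ) := by exact_mod_cast hn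
    linarith
  have hT3 : ((n : ℝ) - 1) * (l ^ 2 * (B + 1) / (2 * (l ^ 2 * s ^ 2 + c ^ 2) * B)) ≥ 1 / 2 := by
    have hpos : (0:ℝ) ≤ l ^ 2 * (B + 1) / (2 * (l ^ 2 * s ^ 2 + c ^ 2) * B) := by positivity
    nlinarith
  -- Term 2 ≥ 0
  have hD : deriv (fl l) r = c * (l ^ 2 * s ^ 2 / 2 + 1) / B ^ ((5:ℝ)/4) := deriv_fl l r
  have hB54 : (0:ℝ) < B ^ ((5:ℝ)/4) := Real.rpow_pos_of_pos hB _
  have hBle : B ≤ B ^ ((5:ℝ)/4) := by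
    calc B = B ^ (1:ℝ) := (Real.rpow_one B).symm
    _ ≤ B ^ ((5:ℝ)/4) := Real.rpow_le_rpow_of_exponent_le hB1 (by norm_num)
  have hD0 : 0 ≤ deriv (fl l) r := by rw [hD]; positivity
  have hD1 : deriv (fl l) r ≤ 1 := by
    rw [hD, div_le_one hB54]
    nlinarith
  have hT2 : ((m : ℝ) - 1) * ((1 - (deriv (fl l) r) ^ 2) / (fl l r) ^ 2) ≥ 0 := by
    have hm1 : (0:ℝ) ≤ (m:ℝ) - 1 := by
      have : (1:ℝ) ≤ (m:ℝ) := by exact_mod_cast hm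
      linarith
    have : (0:ℝ) ≤ 1 - (deriv (fl l) r) ^ 2 := by nlinarith
    have hfq : (0:ℝ) ≤ (fl l r) ^ 2 := sq_nonneg _
    positivity
  linarith
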